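/- Let T = conv{(0,0,0),(0,2,0),(2,0,0)} ⊆ ℝ³ and, for rational h > 0, let T^h = conv(T ∪ {(1/2, 1/2, h)}). Then for every rational h ≥ 4/3: (a) T^h ∩ ℤ³ = T ∩ ℤ³, and (b) the split closure of T^h contains T^{h/4}, i.e., T^{h/4} ⊆ SC(T^h). -/

import Mathlib

open Set Pointwise

/-- Dot product of an integer vector with a real vector. -/
def zdot {n : ℕ} (c : Fin n → ℤ) (x : Fin n → ℝ) : ℝ := ∑ i, (c i : ℝ) * x i

/-- Dot product of two real vectors. -/
def rdot {n : ℕ} (c x : Fin n → ℝ) : ℝ := ∑ i, c i * x i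

/-- The integer points of `ℝ^n`. -/
def latticePts (n : ℕ) : Set (Fin n → ℝ) := {x | ∀ i, ∃ z : ℤ, x i = (z : ℝ)}

/-- A polyhedron: finite intersection of halfspaces. -/
def IsPolyhedron {n : ℕ} (Q : Set (Fin n → ℝ)) : Prop :=
  ∃ (m : ℕ) (A : Fin m → Fin n → ℝ) (b : Fin m → ℝ), Q = {x | ∀ i, rdot (A i) x ≤ b i}

/-- A rational polyhedron: the data `A`, `b` can be chosen rational. -/
def IsRatPolyhedron {n : ℕ} (Q : Set (Fin n → ℝ)) : Prop :=
  ∃ (m : ℕ) (A : Fin m → Fin n → ℚ) (b : Fin m → ℚ),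
    Q = {x | ∀ i, ∑ j, (A i j : ℝ) * x j ≤ (b i : ℝ)}

/-- The integer hull of a set: the convex hull of its integer points. -/
def intHull {n : ℕ} (Q : Set (Fin n → ℝ)) : Set (Fin n → ℝ) := convexHull ℝ (Q ∩ latticePts n)

/-- An integral polyhedron: a polyhedron equal to the convex hull of its integer points. -/
def IsIntegralPolyhedron {n : ℕ} (P : Set (Fin n → ℝ)) : Prop :=
  IsPolyhedron P ∧ P = intHull P

/-- The Chvátal–Gomory closure of a set. -/
def cgClosure {n : ℕ} (Q : Set (Fin n → ℝ)) : Set (Fin n → ℝ) :=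
  {x ∈ Q | ∀ (c : Fin n → ℤ) (δ : ℝ), (∀ y ∈ Q, zdot c y ≤ δ) → zdot c x ≤ (⌊δ⌋ : ℝ)}

/-- The `p`-th iterated CG closure. -/
def cgIter {n : ℕ} (p : ℕ) (Q : Set (Fin n → ℝ)) : Set (Fin n → ℝ) := cgClosure^[p] Q

/-- The CG rank: the least `p` with `Q^(p) = Q_I`, as an extended natural number
(`⊤` if no such `p` exists). -/
noncomputable def cgRank {n : ℕ} (Q : Set (Fin n → ℝ)) : ℕ∞ :=
  sInf {p : ℕ∞ | ∃ m : ℕ, p = (m : ℕ∞) ∧ cgIter m Q = intHull Q}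

/-- A relaxation of an integral polyhedron `P`: a rational polyhedron with the
same integer points. -/
def IsRelaxation {n : ℕ} (P Q : Set (Fin n → ℝ)) : Prop :=
  IsRatPolyhedron Q ∧ Q ∩ latticePts n = P ∩ latticePts n

/-- `r*(P) = +∞`: for every `p` some relaxation of `P` has CG rank larger than `p`. -/
def RStarInfinite {n : ℕ} (P : Set (Fin n → ℝ)) : Prop :=
  ∀ p : ℕ, ∃ Q : Set (Fin n → ℝ), IsRelaxation P Q ∧ (p : ℕ∞) < cgRank Q

/-- The recession cone of a convex set. -/
def recCone {n : ℕ} (P : Set (Fin n → ℝ)) : Set (Fin n → ℝ) :=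
  {v | ∀ x ∈ P, ∀ α : ℝ, 0 ≤ α → x + α • v ∈ P}

/-- The linear span `⟨v⟩` of a single vector, as a set. -/
def spanLine {n : ℕ} (v : Fin n → ℝ) : Set (Fin n → ℝ) := {w | ∃ t : ℝ, w = t • v}

/-- A set is relatively lattice-free if its relative interior contains no integer point. -/
def RelLatticeFree {n : ℕ} (C : Set (Fin n → ℝ)) : Prop :=
  intrinsicInterior ℝ C ∩ latticePts n = ∅

/-- A set is lattice-free if its interior contains no integer point. -/
def LatticeFree {n : ℕ} (C : Set (Fin n → ℝ)) : Prop :=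
  interior C ∩ latticePts n = ∅

/-- `SC_{α,β}(Q) = conv((Q ∩ {α·x ≤ β}) ∪ (Q ∩ {α·x ≥ β + 1}))`. -/
def splitPiece {n : ℕ} (α : Fin n → ℤ) (β : ℤ) (Q : Set (Fin n → ℝ)) : Set (Fin n → ℝ) :=
  convexHull ℝ ((Q ∩ {x | zdot α x ≤ (β : ℝ)}) ∪ (Q ∩ {x | (β : ℝ) + 1 ≤ zdot α x}))

/-- The split closure of `Q`. -/
def splitClosure {n : ℕ} (Q : Set (Fin n → ℝ)) : Set (Fin n → ℝ) :=
  ⋂ (α : Fin n → ℤ) (β : ℤ), splitPiece α β Q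

/-- The triangle `T = conv{(0,0,0), (0,2,0), (2,0,0)} ⊆ ℝ³`. -/
def Ttri : Set (Fin 3 → ℝ) :=
  convexHull ℝ {![0, 0, 0], ![0, 2, 0], ![2, 0, 0]}

/-- `T^h = conv(T ∪ {(1/2, 1/2, h)})`. -/
def Th (h : ℚ) : Set (Fin 3 → ℝ) :=
  convexHull ℝ (Ttri ∪ {![1 / 2, 1 / 2, (h : ℝ)]})

lemma zdot3 (α : Fin 3 → ℤ) (x y z : ℝ) :
    zdot α ![x, y, z] = (α 0 : ℝ) * x + (α 1 : ℝ) * y + (α 2 : ℝ) * z := by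
  simp [zdot, Fin.sum_univ_three]

lemma mem_hull4 {v0 v1 v2 v3 x : Fin 3 → ℝ} (c0 c1 c2 c3 : ℝ)
    (h0 : 0 ≤ c0) (h1 : 0 ≤ c1) (h2 : 0 ≤ c2) (h3 : 0 ≤ c3)
    (hs : c0 + c1 + c2 + c3 = 1)
    (hx : x = c0 • v0 + c1 • v1 + c2 • v2 + c3 • v3) :
    x ∈ convexHull ℝ ({v0, v1, v2, v3} : Set (Fin 3 → ℝ)) := by
  subst hx
  have := (convex_convexHull ℝ ({v0, v1, v2, v3} : Set (Fin 3 → ℝ))).sum_mem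
    (t := (Finset.univ : Finset (Fin 4))) (w := ![c0, c1, c2, c3]) (z := ![v0, v1, v2, v3])
    (by intro i _; fin_cases i <;> simpa) (by simp [Fin.sum_univ_four]; linarith)
    (by intro i _; fin_cases i <;> exact subset_convexHull ℝ _ (by simp))
  simpa [Fin.sum_univ_four] using this

lemma mem_hull3 {v0 v1 v2 x : Fin 3 → ℝ} (c0 c1 c2 : ℝ)
    (h0 : 0 ≤ c0) (h1 : 0 ≤ c1) (h2 : 0 ≤ c2)
    (hs : c0 + c1 + c2 = 1)
    (hx : x = c0 • v0 + c1 • v1 + c2 • v2) :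
    x ∈ convexHull ℝ ({v0, v1, v2} : Set (Fin 3 → ℝ)) := by
  subst hx
  have := (convex_convexHull ℝ ({v0, v1, v2} : Set (Fin 3 → ℝ))).sum_mem
    (t := (Finset.univ : Finset (Fin 3))) (w := ![c0, c1, c2]) (z := ![v0, v1, v2])
    (by intro i _; fin_cases i <;> simpa) (by simp [Fin.sum_univ_three]; linarith)
    (by intro i _; fin_cases i <;> exact subset_convexHull ℝ _ (by simp))
  simpa [Fin.sum_univ_three] using this

lemma Th_eq (h : ℚ) : Th h = convexHull ℝ
    ({![0, 0, 0], ![0, 2, 0], ![2, 0, 0], ![1 / 2, 1 / 2, (h : ℝ)]} : Set (Fin 3 → ℝ)) := by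
  rw [Th, Ttri, convexHull_convexHull_union_left]
  congr 1
  ext x
  simp [or_assoc, or_comm, or_left_comm]

lemma mem_Th (h : ℚ) (x : Fin 3 → ℝ) (c0 c1 c2 c3 : ℝ)
    (h0 : 0 ≤ c0) (h1 : 0 ≤ c1) (h2 : 0 ≤ c2) (h3 : 0 ≤ c3)
    (hs : c0 + c1 + c2 + c3 = 1)
    (e0 : x 0 = 2 * c2 + c3 / 2) (e1 : x 1 = 2 * c1 + c3 / 2) (e2 : x 2 = c3 * h) :
    x ∈ Th h := by
  rw [Th_eq]
  refine mem_hull4 c0 c1 c2 c3 h0 h1 h2 h3 hs ?_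
  funext i
  fin_cases i <;> simp [e0, e1, e2] <;> ring

lemma pair_mem {α : Fin 3 → ℤ} {β : ℤ} {Q : Set (Fin 3 → ℝ)} {p q x : Fin 3 → ℝ}
    (hpQ : p ∈ Q) (hqQ : q ∈ Q) (hp : zdot α p ≤ (β : ℝ)) (hq : (β : ℝ) + 1 ≤ zdot α q)
    {l : ℝ} (h0 : 0 ≤ l) (h1 : l ≤ 1) (hx : x = l • p + (1 - l) • q) :
    x ∈ splitPiece α β Q := by
  subst hx
  have hcx := convex_convexHull ℝ
    ((Q ∩ {x | zdot α x ≤ (β : ℝ)}) ∪ (Q ∩ {x | (β : ℝ) + 1 ≤ zdot α x}))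
  have hpm : p ∈ splitPiece α β Q :=
    subset_convexHull ℝ _ (Or.inl ⟨hpQ, hp⟩)
  have hqm : q ∈ splitPiece α β Q :=
    subset_convexHull ℝ _ (Or.inr ⟨hqQ, hq⟩)
  exact hcx hpm hqm h0 (by linarith) (by ring)

lemma mem_mid (h : ℚ) (hpos : 0 < (h : ℝ)) (z : ℝ) (hz0 : 0 ≤ z) (hz1 : z ≤ (h : ℝ)) :
    ![(1:ℝ)/2, 1/2, z] ∈ Th h := by
  refine mem_Th h _ ((1 - z / h) / 2) ((1 - z / h) / 4) ((1 - z / h) / 4) (z / h) ?_ ?_ ?_ ?_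
    (by ring) ?_ ?_ ?_
  · have : z / h ≤ 1 := by rw [div_le_one hpos]; exact hz1
    linarith
  · have : z / h ≤ 1 := by rw [div_le_one hpos]; exact hz1
    linarith
  · have : z / h ≤ 1 := by rw [div_le_one hpos]; exact hz1
    linarith
  · positivity
  · simp; ring
  · simp; ring
  · simp; field_simp

lemma vertical_case (h : ℚ) (hpos : 0 < (h : ℝ)) (α : Fin 3 → ℤ) (β : ℤ)
    (hg : (α 2 : ℝ) ≠ 0)
    (h1 : (β : ℝ) < (α 0 : ℝ)/2 + (α 1 : ℝ)/2 + (α 2 : ℝ)*(h : ℝ)/4)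
    (h2 : (α 0 : ℝ)/2 + (α 1 : ℝ)/2 + (α 2 : ℝ)*(h : ℝ)/4 < (β : ℝ)+1)
    (hzp0 : 0 ≤ ((β : ℝ) - ((α 0 : ℝ)+(α 1 : ℝ))/2)/(α 2 : ℝ))
    (hzp1 : ((β : ℝ) - ((α 0 : ℝ)+(α 1 : ℝ))/2)/(α 2 : ℝ) ≤ (h : ℝ))
    (hzq0 : 0 ≤ ((β : ℝ)+1 - ((α 0 : ℝ)+(α 1 : ℝ))/2)/(α 2 : ℝ))
    (hzq1 : ((β : ℝ)+1 - ((α 0 : ℝ)+(α 1 : ℝ))/2)/(α 2 : ℝ) ≤ (h : ℝ)) :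
    ![(1:ℝ)/2, 1/2, (h : ℝ)/4] ∈ splitPiece α β (Th h) := by
  set A := (α 0 : ℝ) with hA
  set B := (α 1 : ℝ) with hB
  set g := (α 2 : ℝ) with hG
  set zp := ((β : ℝ) - (A+B)/2)/g with hzp
  set zq := ((β : ℝ)+1 - (A+B)/2)/g with hzq
  have ep : g * zp = (β : ℝ) - (A+B)/2 := by rw [hzp]; field_simp
  have eq' : g * zq = (β : ℝ)+1 - (A+B)/2 := by rw [hzq]; field_simp
  refine pair_mem (p := ![1/2, 1/2, zp]) (q := ![1/2, 1/2, zq])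
    (mem_mid h hpos zp hzp0 hzp1) (mem_mid h hpos zq hzq0 hzq1)
    ?_ ?_ (l := (β : ℝ)+1 - (A/2+B/2+g*(h : ℝ)/4)) (by linarith) (by linarith) ?_
  · rw [zdot3, ← hA, ← hB, ← hG]; linarith
  · rw [zdot3, ← hA, ← hB, ← hG]; linarith
  · funext i
    fin_cases i
    · show (1:ℝ)/2 = _
      simp
      ring
    · show (1:ℝ)/2 = _
      simp
      ring
    · show (h:ℝ)/4 = _
      simp only [Pi.add_apply, Pi.smul_apply, Matrix.cons_val_two, Matrix.tail_cons,
        Matrix.head_cons, smul_eq_mul, Fin.reduceFinMk]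
      rw [hzp, hzq]
      field_simp
      ring

set_option maxHeartbeats 2000000 in
lemma apex_mem (h : ℚ) (hh : 4/3 ≤ h) (α : Fin 3 → ℤ) (β : ℤ) :
    ![(1:ℝ)/2, 1/2, (h : ℝ)/4] ∈ splitPiece α β (Th h) := by
  have hr : (4:ℝ)/3 ≤ (h : ℝ) := by
    have := (Rat.cast_le (K := ℝ)).mpr hh
    push_cast at this
    linarith
  have hpos : (0:ℝ) < (h : ℝ) := by linarith
  -- membership of the various auxiliary points in Th h
  have hapex : ![(1:ℝ)/2, 1/2, (h : ℝ)/4] ∈ Th h := by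
    refine mem_Th h _ (3/8) (3/16) (3/16) (1/4) (by norm_num) (by norm_num) (by norm_num)
      (by norm_num) (by norm_num) (by norm_num) (by norm_num) (by norm_num [Matrix.cons_val_two]; ring)
  have m010 : ![(0:ℝ), 1/2, 0] ∈ Th h := by
    refine mem_Th h _ (3/4) (1/4) 0 0 (by norm_num) (by norm_num) (by norm_num)
      (by norm_num) (by norm_num) (by norm_num) (by norm_num) (by norm_num [Matrix.cons_val_two])
  have m110 : ![(1:ℝ), 1/2, 0] ∈ Th h := by
    refine mem_Th h _ (1/4) (1/4) (1/2) 0 (by norm_num) (by norm_num) (by norm_num)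
      (by norm_num) (by norm_num) (by norm_num) (by norm_num) (by norm_num [Matrix.cons_val_two])
  have m100 : ![(1:ℝ)/2, 0, 0] ∈ Th h := by
    refine mem_Th h _ (3/4) 0 (1/4) 0 (by norm_num) (by norm_num) (by norm_num)
      (by norm_num) (by norm_num) (by norm_num) (by norm_num) (by norm_num [Matrix.cons_val_two])
  have m120 : ![(1:ℝ)/2, 1, 0] ∈ Th h := by
    refine mem_Th h _ (1/4) (1/2) (1/4) 0 (by norm_num) (by norm_num) (by norm_num)
      (by norm_num) (by norm_num) (by norm_num) (by norm_num) (by norm_num [Matrix.cons_val_two])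
  have mq1 : ![(1:ℝ), 1/2, (h : ℝ)/2] ∈ Th h := by
    refine mem_Th h _ 0 (1/8) (3/8) (1/2) (by norm_num) (by norm_num) (by norm_num)
      (by norm_num) (by norm_num) (by norm_num) (by norm_num) (by norm_num [Matrix.cons_val_two]; ring)
  have mq2 : ![(1:ℝ)/2, 1, (h : ℝ)/2] ∈ Th h := by
    refine mem_Th h _ 0 (3/8) (1/8) (1/2) (by norm_num) (by norm_num) (by norm_num)
      (by norm_num) (by norm_num) (by norm_num) (by norm_num) (by norm_num [Matrix.cons_val_two]; ring)
  have mu1 : ![(3:ℝ)/5, 1/2, 3*(h : ℝ)/10] ∈ Th h := by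
    refine mem_Th h _ (3/10) (7/40) (9/40) (3/10) (by norm_num) (by norm_num) (by norm_num)
      (by norm_num) (by norm_num) (by norm_num) (by norm_num) (by norm_num [Matrix.cons_val_two]; ring)
  have mu2 : ![(2:ℝ)/5, 1/2, 3*(h : ℝ)/10] ∈ Th h := by
    refine mem_Th h _ (2/5) (7/40) (1/8) (3/10) (by norm_num) (by norm_num) (by norm_num)
      (by norm_num) (by norm_num) (by norm_num) (by norm_num) (by norm_num [Matrix.cons_val_two]; ring)
  have mu3 : ![(1:ℝ)/2, 3/5, 3*(h : ℝ)/10] ∈ Th h := by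
    refine mem_Th h _ (3/10) (9/40) (7/40) (3/10) (by norm_num) (by norm_num) (by norm_num)
      (by norm_num) (by norm_num) (by norm_num) (by norm_num) (by norm_num [Matrix.cons_val_two]; ring)
  have mu4 : ![(1:ℝ)/2, 2/5, 3*(h : ℝ)/10] ∈ Th h := by
    refine mem_Th h _ (2/5) (1/8) (7/40) (3/10) (by norm_num) (by norm_num) (by norm_num)
      (by norm_num) (by norm_num) (by norm_num) (by norm_num) (by norm_num [Matrix.cons_val_two]; ring)
  have hzval : zdot α ![(1:ℝ)/2, 1/2, (h : ℝ)/4]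
      = (α 0 : ℝ)/2 + (α 1 : ℝ)/2 + (α 2 : ℝ)*(h : ℝ)/4 := by
    rw [show ![(1:ℝ)/2, 1/2, (h : ℝ)/4] = ![(1:ℝ)/2, (1:ℝ)/2, (h : ℝ)/4] from rfl, zdot3]
    ring
  rcases le_or_gt (zdot α ![(1:ℝ)/2, 1/2, (h : ℝ)/4]) (β : ℝ) with hle | h1
  · exact subset_convexHull ℝ _ (Or.inl ⟨hapex, hle⟩)
  rcases le_or_gt ((β : ℝ) + 1) (zdot α ![(1:ℝ)/2, 1/2, (h : ℝ)/4]) with hge | h2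
  · exact subset_convexHull ℝ _ (Or.inr ⟨hapex, hge⟩)
  rw [hzval] at h1 h2
  rcases lt_trichotomy (α 2) 0 with hg | hg | hg
  · -- g ≤ -1
    have hg' : α 2 ≤ -1 := by omega
    have hgr : (α 2 : ℝ) ≤ -1 := by exact_mod_cast hg'
    have key1 : (α 2 : ℝ)*(h : ℝ) ≤ -(h : ℝ) := by
      have := mul_le_mul_of_nonneg_right hgr (le_of_lt hpos)
      linarith
    rcases le_or_gt (2*β + 2) (α 0 + α 1) with hv | hnv
    · -- vertical case
      have hvr : (2*(β:ℝ) + 2) ≤ (α 0 : ℝ) + (α 1 : ℝ) := by exact_mod_cast hv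
      refine vertical_case h hpos α β (ne_of_lt (by linarith)) h1 h2 ?_ ?_ ?_ ?_
      · rw [div_nonneg_iff]; right
        constructor
        · linarith
        · linarith
      · rw [div_le_iff_of_neg (by linarith : (α 2:ℝ) < 0)]
        linarith
      · rw [div_nonneg_iff]; right
        constructor
        · linarith
        · linarith
      · rw [div_le_iff_of_neg (by linarith : (α 2:ℝ) < 0)]
        linarith
    · -- g = -1, A+B = 2β+1
      have hS : α 0 + α 1 = 2*β + 1 := by
        have l2 : α 0 + α 1 < 2*β + 2 := hnv
        have l1 : (2*(β:ℝ)) < (α 0 : ℝ) + (α 1 : ℝ) := by linarith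
        have l1' : 2*β < α 0 + α 1 := by exact_mod_cast l1
        omega
      have hSr : (α 0 : ℝ) + (α 1 : ℝ) = 2*(β:ℝ) + 1 := by exact_mod_cast hS
      have hg1 : (α 2 : ℝ) = -1 := by
        have : α 2 = -1 := by
          by_contra hne
          have h2' : α 2 ≤ -2 := by omega
          have h2r : (α 2 : ℝ) ≤ -2 := by exact_mod_cast h2'
          have := mul_le_mul_of_nonneg_right h2r (le_of_lt hpos)
          linarith
        exact_mod_cast this
      rcases lt_trichotomy (α 0) 0 with hA | hA | hA
      · have hA' : α 0 ≤ -1 := by omega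
        have hAr : (α 0 : ℝ) ≤ -1 := by exact_mod_cast hA'
        refine pair_mem (p := ![(3:ℝ)/5, 1/2, 3*(h:ℝ)/10]) (q := ![(0:ℝ), 1/2, 0])
          mu1 m010 ?_ ?_ (l := (5:ℝ)/6) (by norm_num) (by norm_num) ?_
        · rw [zdot3, hg1]; linarith
        · rw [zdot3]; linarith
        · funext i; fin_cases i <;> simp <;> ring
      · have hAr : (α 0 : ℝ) = 0 := by exact_mod_cast hA
        have hB : α 1 = 2*β + 1 := by omega
        rcases le_or_gt 1 (α 1) with hBp | hBn
        · have hBr : (1:ℝ) ≤ (α 1 : ℝ) := by exact_mod_cast hBp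
          refine pair_mem (p := ![(1:ℝ)/2, 2/5, 3*(h:ℝ)/10]) (q := ![(1:ℝ)/2, 1, 0])
            mu4 m120 ?_ ?_ (l := (5:ℝ)/6) (by norm_num) (by norm_num) ?_
          · rw [zdot3, hg1]; linarith
          · rw [zdot3]; linarith
          · funext i; fin_cases i <;> simp <;> ring
        · have hBn' : α 1 ≤ -1 := by omega
          have hBr : (α 1 : ℝ) ≤ -1 := by exact_mod_cast hBn'
          refine pair_mem (p := ![(1:ℝ)/2, 3/5, 3*(h:ℝ)/10]) (q := ![(1:ℝ)/2, 0, 0])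
            mu3 m100 ?_ ?_ (l := (5:ℝ)/6) (by norm_num) (by norm_num) ?_
          · rw [zdot3, hg1]; linarith
          · rw [zdot3]; linarith
          · funext i; fin_cases i <;> simp <;> ring
      · have hA' : 1 ≤ α 0 := by omega
        have hAr : (1:ℝ) ≤ (α 0 : ℝ) := by exact_mod_cast hA'
        refine pair_mem (p := ![(2:ℝ)/5, 1/2, 3*(h:ℝ)/10]) (q := ![(1:ℝ), 1/2, 0])
          mu2 m110 ?_ ?_ (l := (5:ℝ)/6) (by norm_num) (by norm_num) ?_
        · rw [zdot3, hg1]; linarith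
        · rw [zdot3]; linarith
        · funext i; fin_cases i <;> simp <;> ring
  · -- g = 0
    have hgr : (α 2 : ℝ) = 0 := by exact_mod_cast hg
    rw [hgr] at h1 h2
    have hS : α 0 + α 1 = 2*β + 1 := by
      have l1 : (2*(β:ℝ)) < (α 0 : ℝ) + (α 1 : ℝ) := by linarith
      have l2 : ((α 0 : ℝ) + (α 1 : ℝ)) < 2*(β:ℝ) + 2 := by linarith
      have l1' : 2*β < α 0 + α 1 := by exact_mod_cast l1
      have l2' : α 0 + α 1 < 2*β + 2 := by exact_mod_cast l2
      omega
    have hSr : (α 0 : ℝ) + (α 1 : ℝ) = 2*(β:ℝ) + 1 := by exact_mod_cast hS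
    rcases lt_trichotomy (α 0) 0 with hA | hA | hA
    · have hA' : α 0 ≤ -1 := by omega
      have hAr : (α 0 : ℝ) ≤ -1 := by exact_mod_cast hA'
      refine pair_mem (p := ![(1:ℝ), 1/2, (h:ℝ)/2]) (q := ![(0:ℝ), 1/2, 0])
        mq1 m010 ?_ ?_ (l := (1:ℝ)/2) (by norm_num) (by norm_num) ?_
      · rw [zdot3, hgr]; linarith
      · rw [zdot3, hgr]; linarith
      · funext i; fin_cases i <;> simp <;> ring
    · have hAr : (α 0 : ℝ) = 0 := by exact_mod_cast hA
      have hB : α 1 = 2*β + 1 := by omega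
      rcases le_or_gt 1 (α 1) with hBp | hBn
      · have hBr : (1:ℝ) ≤ (α 1 : ℝ) := by exact_mod_cast hBp
        refine pair_mem (p := ![(1:ℝ)/2, 0, 0]) (q := ![(1:ℝ)/2, 1, (h:ℝ)/2])
          m100 mq2 ?_ ?_ (l := (1:ℝ)/2) (by norm_num) (by norm_num) ?_
        · rw [zdot3, hgr]; linarith
        · rw [zdot3, hgr]; linarith
        · funext i; fin_cases i <;> simp <;> ring
      · have hBn' : α 1 ≤ -1 := by omega
        have hBr : (α 1 : ℝ) ≤ -1 := by exact_mod_cast hBn'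
        refine pair_mem (p := ![(1:ℝ)/2, 1, (h:ℝ)/2]) (q := ![(1:ℝ)/2, 0, 0])
          mq2 m100 ?_ ?_ (l := (1:ℝ)/2) (by norm_num) (by norm_num) ?_
        · rw [zdot3, hgr]; linarith
        · rw [zdot3, hgr]; linarith
        · funext i; fin_cases i <;> simp <;> ring
    · have hA' : 1 ≤ α 0 := by omega
      have hAr : (1:ℝ) ≤ (α 0 : ℝ) := by exact_mod_cast hA'
      refine pair_mem (p := ![(0:ℝ), 1/2, 0]) (q := ![(1:ℝ), 1/2, (h:ℝ)/2])
        m010 mq1 ?_ ?_ (l := (1:ℝ)/2) (by norm_num) (by norm_num) ?_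
      · rw [zdot3, hgr]; linarith
      · rw [zdot3, hgr]; linarith
      · funext i; fin_cases i <;> simp <;> ring
  · -- g ≥ 1
    have hg' : 1 ≤ α 2 := by omega
    have hgr : (1:ℝ) ≤ (α 2 : ℝ) := by exact_mod_cast hg'
    have key2 : (h : ℝ) ≤ (α 2 : ℝ)*(h : ℝ) := by
      have := mul_le_mul_of_nonneg_right hgr (le_of_lt hpos)
      linarith
    rcases le_or_gt (α 0 + α 1) (2*β) with hv | hnv
    · -- vertical case
      have hvr : (α 0 : ℝ) + (α 1 : ℝ) ≤ 2*(β:ℝ) := by exact_mod_cast hv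
      refine vertical_case h hpos α β (ne_of_gt (by linarith)) h1 h2 ?_ ?_ ?_ ?_
      · exact div_nonneg (by linarith) (by linarith)
      · rw [div_le_iff₀ (by linarith : (0:ℝ) < (α 2:ℝ))]
        linarith
      · refine div_nonneg ?_ (by linarith)
        linarith
      · rw [div_le_iff₀ (by linarith : (0:ℝ) < (α 2:ℝ))]
        linarith
    · -- g = 1, A+B = 2β+1
      have hS : α 0 + α 1 = 2*β + 1 := by
        have l1 : 2*β < α 0 + α 1 := hnv
        have l2r : ((α 0 : ℝ) + (α 1 : ℝ)) < 2*(β:ℝ) + 2 := by linarith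
        have l2 : α 0 + α 1 < 2*β + 2 := by exact_mod_cast l2r
        omega
      have hSr : (α 0 : ℝ) + (α 1 : ℝ) = 2*(β:ℝ) + 1 := by exact_mod_cast hS
      have hg1 : (α 2 : ℝ) = 1 := by
        have : α 2 = 1 := by
          by_contra hne
          have h2' : 2 ≤ α 2 := by omega
          have h2r : (2:ℝ) ≤ (α 2 : ℝ) := by exact_mod_cast h2'
          have := mul_le_mul_of_nonneg_right h2r (le_of_lt hpos)
          linarith
        exact_mod_cast this
      rcases lt_trichotomy (α 0) 0 with hA | hA | hA
      · have hA' : α 0 ≤ -1 := by omega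
        have hAr : (α 0 : ℝ) ≤ -1 := by exact_mod_cast hA'
        refine pair_mem (p := ![(1:ℝ), 1/2, 0]) (q := ![(2:ℝ)/5, 1/2, 3*(h:ℝ)/10])
          m110 mu2 ?_ ?_ (l := (1:ℝ)/6) (by norm_num) (by norm_num) ?_
        · rw [zdot3]; linarith
        · rw [zdot3, hg1]; linarith
        · funext i; fin_cases i <;> simp <;> ring
      · have hAr : (α 0 : ℝ) = 0 := by exact_mod_cast hA
        have hB : α 1 = 2*β + 1 := by omega
        rcases le_or_gt 1 (α 1) with hBp | hBn
        · have hBr : (1:ℝ) ≤ (α 1 : ℝ) := by exact_mod_cast hBp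
          refine pair_mem (p := ![(1:ℝ)/2, 0, 0]) (q := ![(1:ℝ)/2, 3/5, 3*(h:ℝ)/10])
            m100 mu3 ?_ ?_ (l := (1:ℝ)/6) (by norm_num) (by norm_num) ?_
          · rw [zdot3]; linarith
          · rw [zdot3, hg1]; linarith
          · funext i; fin_cases i <;> simp <;> ring
        · have hBn' : α 1 ≤ -1 := by omega
          have hBr : (α 1 : ℝ) ≤ -1 := by exact_mod_cast hBn'
          refine pair_mem (p := ![(1:ℝ)/2, 1, 0]) (q := ![(1:ℝ)/2, 2/5, 3*(h:ℝ)/10])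
            m120 mu4 ?_ ?_ (l := (1:ℝ)/6) (by norm_num) (by norm_num) ?_
          · rw [zdot3]; linarith
          · rw [zdot3, hg1]; linarith
          · funext i; fin_cases i <;> simp <;> ring
      · have hA' : 1 ≤ α 0 := by omega
        have hAr : (1:ℝ) ≤ (α 0 : ℝ) := by exact_mod_cast hA'
        refine pair_mem (p := ![(0:ℝ), 1/2, 0]) (q := ![(3:ℝ)/5, 1/2, 3*(h:ℝ)/10])
          m010 mu1 ?_ ?_ (l := (1:ℝ)/6) (by norm_num) (by norm_num) ?_
        · rw [zdot3]; linarith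
        · rw [zdot3, hg1]; linarith
        · funext i; fin_cases i <;> simp <;> ring

lemma Th_ineq (h : ℚ) (a0 a1 a2 b : ℝ)
    (H0 : 0 ≤ b) (H1 : 2*a1 ≤ b) (H2 : 2*a0 ≤ b) (H3 : a0/2 + a1/2 + a2*(h:ℝ) ≤ b) :
    ∀ x ∈ Th h, a0 * x 0 + a1 * x 1 + a2 * x 2 ≤ b := by
  intro x hx
  rw [Th_eq] at hx
  have hlin : IsLinearMap ℝ (fun y : Fin 3 → ℝ => a0*y 0 + a1*y 1 + a2*y 2) := by
    constructor
    · intro u v; simp only [Pi.add_apply]; ring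
    · intro c u; simp only [Pi.smul_apply, smul_eq_mul]; ring
  have hconv : Convex ℝ {y : Fin 3 → ℝ | a0*y 0 + a1*y 1 + a2*y 2 ≤ b} :=
    convex_halfSpace_le hlin b
  have hsub : ({![0, 0, 0], ![0, 2, 0], ![2, 0, 0], ![1 / 2, 1 / 2, (h : ℝ)]} : Set (Fin 3 → ℝ))
      ⊆ {y : Fin 3 → ℝ | a0*y 0 + a1*y 1 + a2*y 2 ≤ b} := by
    intro v hv
    simp only [Set.mem_insert_iff, Set.mem_singleton_iff] at hv
    rcases hv with rfl | rfl | rfl | rfl <;> simp <;> linarith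
  exact convexHull_min hsub hconv hx

lemma Ttri_sub_Th (h : ℚ) : Ttri ⊆ Th h :=
  fun _ hx => subset_convexHull ℝ _ (Or.inl hx)

lemma partA (h : ℚ) (hh : 4/3 ≤ h) : Th h ∩ latticePts 3 = Ttri ∩ latticePts 3 := by
  have hr : (4:ℝ)/3 ≤ (h : ℝ) := by
    have := (Rat.cast_le (K := ℝ)).mpr hh
    push_cast at this
    linarith
  have hpos : (0:ℝ) < (h : ℝ) := by linarith
  apply Set.Subset.antisymm
  · rintro x ⟨hx, hlat⟩
    refine ⟨?_, hlat⟩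
    obtain ⟨z0, e0⟩ := hlat 0
    obtain ⟨z1, e1⟩ := hlat 1
    obtain ⟨z2, e2⟩ := hlat 2
    have i1 : -x 2 ≤ 0 := by
      have := Th_ineq h 0 0 (-1) 0 (le_refl 0) (by norm_num) (by norm_num) (by linarith) x hx
      linarith
    have i2 : -2*(h:ℝ) * x 0 + x 2 ≤ 0 := by
      have := Th_ineq h (-2*(h:ℝ)) 0 1 0 (le_refl 0) (by norm_num) (by linarith)
        (by ring_nf; linarith) x hx
      linarith
    have i3 : -2*(h:ℝ) * x 1 + x 2 ≤ 0 := by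
      have := Th_ineq h 0 (-2*(h:ℝ)) 1 0 (le_refl 0) (by linarith) (by norm_num)
        (by ring_nf; linarith) x hx
      linarith
    have i4 : x 0 + x 1 + (1/(h:ℝ)) * x 2 ≤ 2 := by
      have := Th_ineq h 1 1 (1/(h:ℝ)) 2 (by norm_num) (by norm_num) (by norm_num)
        (by field_simp; norm_num) x hx
      linarith
    have hx2 : x 2 = 0 := by
      by_contra hne
      have hx2pos : 0 < x 2 := lt_of_le_of_ne (by linarith) (Ne.symm hne)
      have hz2 : 1 ≤ z2 := by
        have : (0:ℝ) < (z2:ℝ) := by rw [← e2]; exact hx2pos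
        exact_mod_cast this
      have hx2ge : (1:ℝ) ≤ x 2 := by rw [e2]; exact_mod_cast hz2
      have hx0pos : 0 < x 0 := by nlinarith
      have hx0ge : (1:ℝ) ≤ x 0 := by
        have : (0:ℝ) < (z0:ℝ) := by rw [← e0]; exact hx0pos
        have : 1 ≤ z0 := by exact_mod_cast this
        rw [e0]; exact_mod_cast this
      have hx1pos : 0 < x 1 := by nlinarith
      have hx1ge : (1:ℝ) ≤ x 1 := by
        have : (0:ℝ) < (z1:ℝ) := by rw [← e1]; exact hx1pos
        have : 1 ≤ z1 := by exact_mod_cast this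
        rw [e1]; exact_mod_cast this
      have hinvpos : 0 < 1/(h:ℝ) := by positivity
      nlinarith
    have hx0 : 0 ≤ x 0 := by nlinarith
    have hx1 : 0 ≤ x 1 := by nlinarith
    have hsum : x 0 + x 1 ≤ 2 := by
      rw [hx2] at i4
      simpa using i4
    refine mem_hull3 (1 - x 0 / 2 - x 1 / 2) (x 1 / 2) (x 0 / 2)
      (by linarith) (by linarith) (by linarith) (by ring) ?_
    funext i
    fin_cases i
    · show x 0 = _
      simp
      try ring
    · show x 1 = _
      simp
      try ring
    · show x 2 = _
      simp [hx2]
  · rintro x ⟨hx, hlat⟩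
    exact ⟨Ttri_sub_Th h hx, hlat⟩

lemma partB (h : ℚ) (hh : 4/3 ≤ h) : Th (h/4) ⊆ splitClosure (Th h) := by
  have key : ∀ (a : Fin 3 → ℤ) (b : ℤ), Th (h/4) ⊆ splitPiece a b (Th h) := by
    intro a b
    rw [Th_eq (h/4)]
    refine convexHull_min ?_ (convex_convexHull ℝ _)
    intro v hv
    have hmem : ∀ (n : ℤ) (w : Fin 3 → ℝ), w ∈ Th h → zdot a w = (n:ℝ) →
        w ∈ splitPiece a b (Th h) := by
      intro n w hw hzw
      rcases le_or_gt n b with hn | hn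
      · refine subset_convexHull ℝ _ (Or.inl ⟨hw, ?_⟩)
        show zdot a w ≤ (b:ℝ)
        rw [hzw]
        exact_mod_cast hn
      · have hn' : b + 1 ≤ n := hn
        refine subset_convexHull ℝ _ (Or.inr ⟨hw, ?_⟩)
        show (b:ℝ) + 1 ≤ zdot a w
        rw [hzw]
        exact_mod_cast hn'
    simp only [Set.mem_insert_iff, Set.mem_singleton_iff] at hv
    rcases hv with rfl | rfl | rfl | rfl
    · refine hmem 0 _ ?_ (by rw [zdot3]; push_cast; ring)
      exact mem_Th h _ 1 0 0 0 (by norm_num) (by norm_num) (by norm_num) (by norm_num)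
        (by norm_num) (by norm_num) (by norm_num) (by norm_num [Matrix.cons_val_two])
    · refine hmem (2 * a 1) _ ?_ (by rw [zdot3]; push_cast; ring)
      exact mem_Th h _ 0 1 0 0 (by norm_num) (by norm_num) (by norm_num) (by norm_num)
        (by norm_num) (by norm_num) (by norm_num) (by norm_num [Matrix.cons_val_two])
    · refine hmem (2 * a 0) _ ?_ (by rw [zdot3]; push_cast; ring)
      exact mem_Th h _ 0 0 1 0 (by norm_num) (by norm_num) (by norm_num) (by norm_num)
        (by norm_num) (by norm_num) (by norm_num) (by norm_num [Matrix.cons_val_two])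
    · have e : ((h/4 : ℚ) : ℝ) = (h:ℝ)/4 := by push_cast; ring
      rw [show (![1 / 2, 1 / 2, ((h/4 : ℚ) : ℝ)] : Fin 3 → ℝ)
          = ![(1:ℝ)/2, 1/2, (h:ℝ)/4] by rw [e]]
      exact apex_mem h hh a b
  intro x hx
  unfold splitClosure
  exact Set.mem_iInter.2 fun a => Set.mem_iInter.2 fun b => key a b hx

theorem stmt_16 (h : ℚ) (hh : 4 / 3 ≤ h) :
    Th h ∩ latticePts 3 = Ttri ∩ latticePts 3 ∧ Th (h / 4) ⊆ splitClosure (Th h) :=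
  ⟨partA h hh, partB h hh⟩
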